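/- arXiv:1405.4189 — 6 statements merged into one kernel-verified Lean document; each statement's English description precedes it below -/
import Mathlib

section
/- If f is a ranking function for a module P (i.e., a map from valuations into a well-ordered set whose value strictly decreases between consecutive visits to the final location along any execution), then every fair ω-trace of P is terminating (has no infinite execution). -/
/-- If `f` is a ranking function for a module (value strictly decreases between
consecutive visits of the final location along any execution), then every fair
ω-trace of the module is terminating (admits no infinite execution). -/
theorem stmt0 {L St V W : Type} [LinearOrder W] [WellFoundedLT W]
    (δ : L → St → L → Prop) (linit lfin : L)
    (rel : St → V → V → Prop) (f : V → W)
    -- `f` is a ranking function for the module: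
    (hrank : ∀ (n k : ℕ) (ℓ : ℕ → L) (w : ℕ → St) (ν : ℕ → V),
      ℓ 0 = linit →
      (∀ i < n, δ (ℓ i) (w i) (ℓ (i + 1))) →
      (∀ i < n, rel (w i) (ν i) (ν (i + 1))) →
      0 < k → k < n → ℓ k = lfin → ℓ n = lfin →
      f (ν n) < f (ν k))
    -- a fair ω-trace `w` of the module:
    (ℓ : ℕ → L) (w : ℕ → St)
    (hinit : ℓ 0 = linit)
    (hpath : ∀ i, δ (ℓ i) (w i) (ℓ (i + 1)))
    (hfair : ∀ n, ∃ m, n ≤ m ∧ ℓ m = lfin) :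
    ¬ ∃ ν : ℕ → V, ∀ i, rel (w i) (ν i) (ν (i + 1)) := by
  rintro ⟨ν, hν⟩
  -- Build an increasing sequence of visit times to lfin, starting ≥ 1.
  have hstep : ∀ n : ℕ, ∃ m, n < m ∧ ℓ m = lfin := by
    intro n
    obtain ⟨m, hm, hfin⟩ := hfair (n + 1)
    exact ⟨m, Nat.lt_of_succ_le hm, hfin⟩
  choose g hg hgfin using hstep
  let t : ℕ → ℕ := fun i => (g)^[i + 1] 0
  have ht_pos : ∀ i, 0 < t i := by
    intro i
    induction i with
    | zero => exact hg 0
    | succ n ih =>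
      have : t n < t (n + 1) := by
        simpa [t, Function.iterate_succ_apply'] using hg (t n)
      omega
  have ht_lt : ∀ i, t i < t (i + 1) := by
    intro i
    simpa [t, Function.iterate_succ_apply'] using hg (t i)
  have ht_fin : ∀ i, ℓ (t i) = lfin := by
    intro i
    have : t i = g ((g)^[i] 0) := by simp [t, Function.iterate_succ_apply']
    rw [this]; exact hgfin _
  have hdec : ∀ i, f (ν (t (i + 1))) < f (ν (t i)) := by
    intro i
    exact hrank (t (i + 1)) (t i) ℓ w ν hinit (fun j _ => hpath j) (fun j _ => hν j)
      (ht_pos i) (ht_lt i) (ht_fin i) (ht_fin (i + 1))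
  exact RelEmbedding.not_wellFounded (RelEmbedding.natGT (fun i => f (ν (t i))) hdec) wellFounded_lt
end

section
/- Soundness of rank certificates: if (P, f, I) is a certified module — i.e., I maps locations to predicates with I(ℓ_init) ⇔ (oldrnk = ∞), I(ℓ_fin) ⇒ f(v) ≺ oldrnk, every edge (ℓ, st, ℓ') with ℓ ≠ ℓ_fin gives a valid Hoare triple {I(ℓ)} st {I(ℓ')}, and every edge from ℓ_fin gives a valid Hoare triple {I(ℓ_fin)} oldrnk := f(v); st {I(ℓ')} — then f is a ranking function for P, and hence every fair ω-trace of P is terminating. -/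
/-- A certified module: the annotation `I` maps locations to predicates over
valuations extended with the auxiliary variable `oldrnk` (an element of
`WithTop W`, where `⊤` plays the role of `∞`); the initial invariant is
`oldrnk = ∞`, the final invariant implies `f(v) ≺ oldrnk`, edges not leaving
the final location give valid Hoare triples, and edges leaving the final
location give valid Hoare triples with the auxiliary assignment
`oldrnk := f(v)` inserted. -/
def Certified {L St V W : Type} [LinearOrder W]
    (δ : L → St → L → Prop) (linit lfin : L)
    (rel : St → V → V → Prop)
    (f : V → W) (I : L → Set (V × WithTop W)) : Prop :=
  (∀ p, p ∈ I linit ↔ p.2 = ⊤) ∧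
  (∀ p ∈ I lfin, (f p.1 : WithTop W) < p.2) ∧
  (∀ l st l', δ l st l' → l ≠ lfin →
    ∀ ν o ν', (ν, o) ∈ I l → rel st ν ν' → (ν', o) ∈ I l') ∧
  (∀ st l', δ lfin st l' →
    ∀ ν o ν', (ν, o) ∈ I lfin → rel st ν ν' → (ν', (f ν : WithTop W)) ∈ I l')

/-- Soundness of rank certificates: if `(P, f, I)` is a certified module then
`f` is a ranking function for `P`, and hence every fair ω-trace of `P` is
terminating. -/
theorem stmt10 {L St V W : Type} [LinearOrder W] [WellFoundedLT W]
    (δ : L → St → L → Prop) (linit lfin : L)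
    (rel : St → V → V → Prop)
    (f : V → W) (I : L → Set (V × WithTop W))
    (hcert : Certified δ linit lfin rel f I) :
    -- f is a ranking function for P:
    (∀ (n k : ℕ) (ℓ : ℕ → L) (w : ℕ → St) (ν : ℕ → V),
      ℓ 0 = linit →
      (∀ i < n, δ (ℓ i) (w i) (ℓ (i + 1))) →
      (∀ i < n, rel (w i) (ν i) (ν (i + 1))) →
      0 < k → k < n → ℓ k = lfin → ℓ n = lfin →
      f (ν n) < f (ν k)) ∧
    -- hence every fair ω-trace of P is terminating:
    (∀ (ℓ : ℕ → L) (w : ℕ → St),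
      ℓ 0 = linit →
      (∀ i, δ (ℓ i) (w i) (ℓ (i + 1))) →
      (∀ n, ∃ m ≥ n, ℓ m = lfin) →
      ¬ ∃ ν : ℕ → V, ∀ i, rel (w i) (ν i) (ν (i + 1))) := by
  obtain ⟨hinit, hfin, hstep, hstepf⟩ := hcert
  have main : ∀ (n k : ℕ) (ℓ : ℕ → L) (w : ℕ → St) (ν : ℕ → V),
      ℓ 0 = linit →
      (∀ i < n, δ (ℓ i) (w i) (ℓ (i + 1))) →
      (∀ i < n, rel (w i) (ν i) (ν (i + 1))) →
      0 < k → k < n → ℓ k = lfin → ℓ n = lfin →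
      f (ν n) < f (ν k) := by
    classical
    intro n k ℓ w ν h0 hδ hrel hk0 hkn hkf hnf
    set o : ℕ → WithTop W := fun i =>
      Nat.rec ⊤ (fun i oi => if ℓ i = lfin then (f (ν i) : WithTop W) else oi) i with ho
    have o0 : o 0 = ⊤ := rfl
    have osucc : ∀ i, o (i + 1) = if ℓ i = lfin then (f (ν i) : WithTop W) else o i :=
      fun i => rfl
    have inv : ∀ i ≤ n, (ν i, o i) ∈ I (ℓ i) := by
      intro i hi
      induction i with
      | zero => rw [h0]; exact (hinit (ν 0, o 0)).2 o0
      | succ i ih =>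
        have hi' : i < n := hi
        have ihi := ih (le_of_lt hi')
        rw [osucc]
        by_cases hc : ℓ i = lfin
        · simp only [hc, if_pos]
          exact hstepf (w i) (ℓ (i+1)) (hc ▸ hδ i hi') (ν i) (o i) (ν (i+1))
            (hc ▸ ihi) (hrel i hi')
        · simp only [hc, if_neg, if_false]
          exact hstep (ℓ i) (w i) (ℓ (i+1)) (hδ i hi') hc (ν i) (o i) (ν (i+1))
            ihi (hrel i hi')
    have odec : ∀ i, i ≤ n → ∀ j, i ≤ j → j ≤ n → o j ≤ o i := by
      intro i hi j hij hjn
      induction j with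
      | zero =>
        have hi0 : i = 0 := by omega
        subst hi0; exact le_rfl
      | succ j ih =>
        rcases Nat.lt_or_ge i (j+1) with h | h
        · have hji : i ≤ j := by omega
          have hle : o j ≤ o i := ih hji (by omega)
          rw [osucc]
          by_cases hc : ℓ j = lfin
          · simp only [hc, if_pos]
            have := hfin (ν j, o j) (hc ▸ inv j (by omega))
            exact le_trans (le_of_lt this) hle
          · simpa [hc] using hle
        · have : i = j + 1 := by omega
          rw [this]
    -- o (k+1) = f (ν k)
    have hk1 : o (k + 1) = (f (ν k) : WithTop W) := by rw [osucc, if_pos hkf]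
    have h1 : o n ≤ o (k + 1) := odec (k+1) (by omega) n (by omega) le_rfl
    have h2 : (f (ν n) : WithTop W) < o n := hfin (ν n, o n) (hnf ▸ inv n le_rfl)
    have : (f (ν n) : WithTop W) < (f (ν k) : WithTop W) := lt_of_lt_of_le h2 (hk1 ▸ h1)
    exact_mod_cast this
  refine ⟨main, ?_⟩
  intro ℓ w h0 hδ hfair ⟨ν, hrel⟩
  -- build a strictly increasing sequence of final indices
  have hF : ∀ n : ℕ, ∃ m ≥ n + 1, ℓ m = lfin := fun n => hfair (n + 1)
  set F : ℕ → ℕ := fun j => Nat.rec (Classical.choose (hF 0))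
    (fun _ Fj => Classical.choose (hF Fj)) j with hFdef
  have hF0 : F 0 ≥ 1 ∧ ℓ (F 0) = lfin := by
    have := Classical.choose_spec (hF 0); exact ⟨this.1, this.2⟩
  have hFs : ∀ j, F (j+1) ≥ F j + 1 ∧ ℓ (F (j+1)) = lfin := by
    intro j
    have := Classical.choose_spec (hF (F j)); exact ⟨this.1, this.2⟩
  have hpos : ∀ j, 0 < F j := by
    intro j; induction j with
    | zero => omega
    | succ j ih => have := (hFs j).1; omega
  have hfinal : ∀ j, ℓ (F j) = lfin := by
    intro j; cases j with
    | zero => exact hF0.2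
    | succ j => exact (hFs j).2
  have hdec : ∀ j, f (ν (F (j+1))) < f (ν (F j)) := by
    intro j
    exact main (F (j+1)) (F j) ℓ w ν h0 (fun i _ => hδ i) (fun i _ => hrel i)
      (hpos j) (by have := (hFs j).1; omega) (hfinal j) (hfinal (j+1))
  exact RelEmbedding.not_wellFounded
    (RelEmbedding.natGT (fun j => f (ν (F j))) hdec) (wellFounded_lt (α := W))
end

section
/- Invariant propagation along a certified path: for a certified module (P, f, I), for every finite path ℓ_0 → ... → ℓ_n from the initial location and every corresponding execution ν_0, ..., ν_n, the extended valuation (ν_i augmented with oldrnk_i, where oldrnk_i = ∞ if ℓ_fin was not yet visited before step i and otherwise oldrnk_i = f(ν_j) for the greatest j < i with ℓ_j = ℓ_fin) satisfies I(ℓ_i), for all i = 0, ..., n. -/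
/-- Invariant propagation along a certified path: for every finite path from
the initial location and every corresponding execution, the valuation at step
`i`, extended with `oldrnk_i` (which is `∞` if `lfin` was not yet visited
before step `i`, and otherwise `f(ν_j)` for the greatest `j < i` with
`ℓ_j = lfin`), satisfies the invariant `I(ℓ_i)`. -/
theorem stmt11 {L St V W : Type} [LinearOrder W] [DecidableEq L]
    (δ : L → St → L → Prop) (linit lfin : L)
    (rel : St → V → V → Prop)
    (f : V → W) (I : L → Set (V × WithTop W))
    (hcert : Certified δ linit lfin rel f I)
    (n : ℕ) (ℓ : ℕ → L) (w : ℕ → St) (ν : ℕ → V)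
    (hinit : ℓ 0 = linit)
    (hpath : ∀ i < n, δ (ℓ i) (w i) (ℓ (i + 1)))
    (hexec : ∀ i < n, rel (w i) (ν i) (ν (i + 1)))
    (o : ℕ → WithTop W)
    (ho0 : o 0 = ⊤)
    (hoS : ∀ i, o (i + 1) = if ℓ i = lfin then (f (ν i) : WithTop W) else o i) :
    ∀ i ≤ n, (ν i, o i) ∈ I (ℓ i) := by
  obtain ⟨h1, h2, h3, h4⟩ := hcert
  intro i hi
  induction i with
  | zero => rw [hinit, h1, ho0]
  | succ k ih =>
    have hk : k < n := hi
    have ihk := ih (le_of_lt hk)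
    rw [hoS k]
    by_cases hc : ℓ k = lfin
    · simp only [hc, if_pos rfl]
      exact h4 (w k) (ℓ (k+1)) (hc ▸ hpath k hk) _ _ _ (hc ▸ ihk) (hexec k hk)
    · simp only [if_neg hc]
      exact h3 _ _ _ (hpath k hk) hc _ _ _ ihk (hexec k hk)
end

section
/- Modification rule 1 preserves certification: if (P, f, I) is a certified module and ℓ_i, ℓ_j are two locations with I(ℓ_i) = I(ℓ_j) (neither equal to the final location unless both are), then the module P' obtained by merging ℓ_i and ℓ_j (redirecting all edges accordingly) together with f and the induced annotation I' is again a certified module. -/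
/-- Modification rule 1 (merge locations) preserves certification: if two
locations `ℓi`, `ℓj` carry the same predicate (and neither is the final
location unless both are), then merging them (redirecting each of them to
`ℓi`, and all edges accordingly) with the induced annotation yields again a
certified module. -/
theorem stmt12 {L St V W : Type} [LinearOrder W] [DecidableEq L]
    (δ : L → St → L → Prop) (linit lfin : L)
    (rel : St → V → V → Prop)
    (f : V → W) (I : L → Set (V × WithTop W))
    (hcert : Certified δ linit lfin rel f I)
    (ℓi ℓj : L) (hI : I ℓi = I ℓj) (hfin : ℓi = lfin ↔ ℓj = lfin) :
    Certified
      (fun l st l' => ∃ p q, δ p st q ∧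
        (if p = ℓj then ℓi else p) = l ∧ (if q = ℓj then ℓi else q) = l')
      (if linit = ℓj then ℓi else linit)
      (if lfin = ℓj then ℓi else lfin)
      rel f I := by
  obtain ⟨h1, h2, h3, h4⟩ := hcert
  have hIm : ∀ x : L, I (if x = ℓj then ℓi else x) = I x := by
    intro x
    split
    · next h => rw [hI, h]
    · rfl
  have hmfin : ∀ p : L,
      (if p = ℓj then ℓi else p) = (if lfin = ℓj then ℓi else lfin) → p = lfin := by
    intro p h
    by_cases hp : p = ℓj <;> by_cases hl : lfin = ℓj <;>
      simp [hp, hl] at h ⊢ <;> try tauto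
    · exact hp (h.trans ((hfin.mpr hl.symm).trans hl))
  refine ⟨?_, ?_, ?_, ?_⟩
  · intro p; rw [hIm]; exact h1 p
  · intro p hp; rw [hIm] at hp; exact h2 p hp
  · rintro l st l' ⟨p, q, hδ, rfl, rfl⟩ hne ν o ν' hmem hrel
    rw [hIm] at hmem ⊢
    exact h3 p st q hδ (fun h => hne (by rw [h])) ν o ν' hmem hrel
  · rintro st l' ⟨p, q, hδ, hp, rfl⟩ ν o ν' hmem hrel
    rw [hIm] at hmem ⊢
    have := hmfin p hp
    subst this
    exact h4 st q hδ ν o ν' hmem hrel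
end

section
/- Büchi decomposition existence: every ω-regular language L over a finite alphabet can be written as a finite union L = ⋃_{i=1}^n U_i · V_i^ω where each U_i and V_i is a regular language of finite words. -/
/-- A language of finite words is regular if it is accepted by a DFA with
finitely many states. -/
def IsRegularLang {A : Type} (U : Set (List A)) : Prop :=
  ∃ (σ : Type) (_ : Fintype σ) (M : DFA A σ), (M.accepts : Set (List A)) = U

/-- `w ∈ U · V^ω`: there are cut points `k 0 < k 1 < ...` such that the prefix
of `w` before `k 0` lies in `U` and each segment `w[k j, k (j+1))` is a
(nonempty) word in `V`. -/
def OmegaCat {A : Type} (U V : Set (List A)) : Set (ℕ → A) :=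
  {w | ∃ k : ℕ → ℕ, (∀ j, k j < k (j + 1)) ∧
        ((List.range (k 0)).map w ∈ U) ∧
        ∀ j, (List.range (k (j + 1) - k j)).map (fun t => w (k j + t)) ∈ V}


namespace Stmt18Aux

variable {A Q : Type}

/-- Nondeterministic reachability along a finite word. -/
inductive Reach (δ : Q → A → Q → Prop) : Q → List A → Q → Prop
  | nil (p : Q) : Reach δ p [] p
  | cons {p r q : Q} {a : A} {x : List A} (h : δ p a r) (h' : Reach δ r x q) :
      Reach δ p (a :: x) q

theorem Reach.nil_eq {δ : Q → A → Q → Prop} {p q : Q} (h : Reach δ p [] q) : p = q := by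
  cases h; rfl

theorem Reach.cons_iff {δ : Q → A → Q → Prop} {p q : Q} {a : A} {x : List A} :
    Reach δ p (a :: x) q ↔ ∃ r, δ p a r ∧ Reach δ r x q := by
  constructor
  · intro h; cases h with | cons h h' => exact ⟨_, h, h'⟩
  · rintro ⟨r, h, h'⟩; exact Reach.cons h h'

theorem Reach.append {δ : Q → A → Q → Prop} {p r q : Q} {x y : List A}
    (h1 : Reach δ p x r) (h2 : Reach δ r y q) : Reach δ p (x ++ y) q := by
  induction h1 with
  | nil => simpa using h2
  | cons h _ ih => exact Reach.cons h (ih h2)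

theorem Reach.exists_run {δ : Q → A → Q → Prop} {p q : Q} {x : List A}
    (h : Reach δ p x q) :
    ∃ σ : ℕ → Q, σ 0 = p ∧ σ x.length = q ∧
      ∀ i, ∀ hi : i < x.length, δ (σ i) (x[i]'hi) (σ (i + 1)) := by
  induction h with
  | nil p => exact ⟨fun _ => p, rfl, rfl, fun i hi => absurd hi (by simp)⟩
  | @cons p r q a x h h' ih =>
      obtain ⟨σ, h0, hlen, hstep⟩ := ih
      refine ⟨fun i => if i = 0 then p else σ (i - 1), by simp, by simp [hlen], ?_⟩
      intro i hi
      match i with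
      | 0 => simpa [h0] using h
      | (j : ℕ) + 1 =>
          have hj : j < x.length := by simpa using hi
          simpa using hstep j hj

theorem reach_of_run {δ : Q → A → Q → Prop} {w : ℕ → A} {ρ : ℕ → Q}
    (hδ : ∀ i, δ (ρ i) (w i) (ρ (i + 1))) (a n : ℕ) :
    Reach δ (ρ a) ((List.range n).map (fun t => w (a + t))) (ρ (a + n)) := by
  induction n with
  | zero => simpa using Reach.nil (ρ a)
  | succ n ih =>
      have hx : (List.range (n + 1)).map (fun t => w (a + t)) =
          (List.range n).map (fun t => w (a + t)) ++ [w (a + n)] := by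
        simp [List.range_succ]
      rw [hx]
      have last : Reach δ (ρ (a + n)) [w (a + n)] (ρ (a + n + 1)) :=
        Reach.cons (hδ (a + n)) (Reach.nil _)
      simpa [← Nat.add_assoc] using ih.append last

theorem isRegular_reach [Fintype Q] (δ : Q → A → Q → Prop) (p q : Q) :
    IsRegularLang {x | Reach δ p x q} := by
  classical
  let N : NFA A Q := ⟨fun s a => {r | δ s a r}, {p}, {q}⟩
  refine ⟨Set Q, inferInstance, N.toDFA, ?_⟩
  rw [NFA.toDFA_correct]
  have key : ∀ (x : List A) (S : Set Q) (r : Q),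
      r ∈ N.evalFrom S x ↔ ∃ s ∈ S, Reach δ s x r := by
    intro x
    induction x with
    | nil =>
        intro S r
        constructor
        · intro h; exact ⟨r, h, Reach.nil r⟩
        · rintro ⟨s, hs, h⟩; cases h; exact hs
    | cons a x ih =>
        intro S r
        have : N.evalFrom S (a :: x) = N.evalFrom (N.stepSet S a) x := rfl
        rw [this, ih]
        constructor
        · rintro ⟨s', hs', h⟩
          rcases Set.mem_iUnion₂.mp hs' with ⟨s, hs, hstep⟩
          exact ⟨s, hs, Reach.cons hstep h⟩
        · rintro ⟨s, hs, h⟩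
          rcases Reach.cons_iff.mp h with ⟨s', hstep, h'⟩
          exact ⟨s', Set.mem_iUnion₂.mpr ⟨s, hs, hstep⟩, h'⟩
  ext x
  rw [NFA.mem_accepts]
  constructor
  · rintro ⟨r, hr, hx⟩
    rcases (key x _ r).mp hx with ⟨s, hs, h⟩
    have hr' : r = q := hr
    have hs' : s = p := hs
    subst hr'; subst hs'
    exact h
  · intro h
    exact ⟨q, rfl, (key x _ q).mpr ⟨p, rfl, h⟩⟩

theorem isRegular_empty : IsRegularLang (∅ : Set (List A)) :=
  ⟨Unit, inferInstance, ⟨fun _ _ => (), (), ∅⟩, by ext x; exact iff_of_false (fun h => h.elim) (fun h => h.elim)⟩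

end Stmt18Aux
namespace Stmt18Aux
variable {A Q : Type}

theorem glue {δ : Q → A → Q → Prop} (w : ℕ → A) (k : ℕ → ℕ) (τ : ℕ → Q)
    (σ : ℕ → ℕ → Q) {f q0 : Q}
    (hk : ∀ j, k j < k (j + 1))
    (hτ0 : τ 0 = q0) (hτlen : τ (k 0) = f)
    (hτstep : ∀ i, i < k 0 → δ (τ i) (w i) (τ (i + 1)))
    (hσ0 : ∀ j, σ j 0 = f) (hσlen : ∀ j, σ j (k (j + 1) - k j) = f)
    (hσstep : ∀ j i, i < k (j + 1) - k j → δ (σ j i) (w (k j + i)) (σ j (i + 1))) :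
    ∃ ρ : ℕ → Q, ρ 0 = q0 ∧ (∀ i, δ (ρ i) (w i) (ρ (i + 1))) ∧ ∀ n, ∃ m ≥ n, ρ m = f := by
  classical
  have hmono : StrictMono k := strictMono_nat_of_lt_succ hk
  have hle : ∀ j, j ≤ k j := fun j => hmono.le_apply
  set J : ℕ → ℕ := fun m => Nat.findGreatest (fun j => k j ≤ m) m with hJdef
  set ρ : ℕ → Q := fun m => if m < k 0 then τ m else σ (J m) (m - k (J m)) with hρdef
  have hJle : ∀ m, k 0 ≤ m → k (J m) ≤ m := fun m h0 =>
    Nat.findGreatest_spec (P := fun j => k j ≤ m) (m := 0) (Nat.zero_le m) h0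
  have hJlt : ∀ m, k 0 ≤ m → m < k (J m + 1) := by
    intro m h0
    by_contra h
    push_neg at h
    have h1 : J m + 1 ≤ m := le_trans (hle _) h
    have h2 : J m + 1 ≤ J m := Nat.le_findGreatest (P := fun j => k j ≤ m) h1 h
    omega
  have hJk : ∀ j, J (k j) = j := by
    intro j
    have h1 : j ≤ J (k j) :=
      Nat.le_findGreatest (P := fun i => k i ≤ k j) (hle j) (le_refl (k j))
    have h2 : J (k j) ≤ j := by
      by_contra h
      push_neg at h
      have h3 : k (j + 1) ≤ k (J (k j)) := hmono.monotone (by omega)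
      have h4 := hJle (k j) (hmono.monotone (Nat.zero_le j))
      have h5 := hk j
      omega
    omega
  have hρk : ∀ j, ρ (k j) = f := by
    intro j
    rw [hρdef]
    simp only
    rw [if_neg (by have := hmono.monotone (Nat.zero_le j); omega), hJk j]
    simpa using hσ0 j
  have hval : ∀ j m, k j ≤ m → m ≤ k (j + 1) → ρ m = σ j (m - k j) := by
    intro j m h1 h2
    have h0 : k 0 ≤ m := le_trans (hmono.monotone (Nat.zero_le j)) h1
    rcases lt_or_eq_of_le h2 with hlt | heq
    · have hJm : J m = j := by
        have hup : J m ≤ j := by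
          by_contra h
          push_neg at h
          have h3 : k (j + 1) ≤ k (J m) := hmono.monotone (by omega)
          have h4 := hJle m h0
          omega
        have hlo : j ≤ J m :=
          Nat.le_findGreatest (P := fun i => k i ≤ m) (le_trans (hle j) h1) h1
        omega
      rw [hρdef]
      simp only
      rw [if_neg (by omega), hJm]
    · rw [heq, hρk (j + 1)]
      exact (hσlen j).symm
  have hvalτ : ∀ m, m ≤ k 0 → ρ m = τ m := by
    intro m hm
    rcases lt_or_eq_of_le hm with hlt | heq
    · rw [hρdef]; simp only; rw [if_pos hlt]
    · rw [heq, hρk 0, hτlen]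
  refine ⟨ρ, ?_, ?_, ?_⟩
  · rw [hvalτ 0 (Nat.zero_le _), hτ0]
  · intro m
    by_cases hm : m + 1 ≤ k 0
    · rw [hvalτ m (by omega), hvalτ (m + 1) hm]
      exact hτstep m (by omega)
    · push_neg at hm
      by_cases hm0 : m < k 0
      · -- impossible: m < k 0 < m + 1 means k 0 = m + 1, contradicting hm
        omega
      · push_neg at hm0
        have h1 := hJle m hm0
        have h2 := hJlt m hm0
        rw [hval (J m) m h1 (le_of_lt h2), hval (J m) (m + 1) (by omega) (by omega)]
        have h3 := hσstep (J m) (m - k (J m)) (by omega)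
        rw [show k (J m) + (m - k (J m)) = m by omega] at h3
        rw [show m + 1 - k (J m) = (m - k (J m)) + 1 by omega]
        exact h3
  · intro n
    exact ⟨k n, le_trans (hle n) (le_refl _), hρk n⟩

end Stmt18Aux

namespace Stmt18Aux
variable {A Q : Type}

theorem exists_run_of_omegaCat {δ : Q → A → Q → Prop} {q0 f : Q} {w : ℕ → A}
    (hw : w ∈ OmegaCat {x | Reach δ q0 x f} {x | Reach δ f x f}) :
    ∃ ρ : ℕ → Q, ρ 0 = q0 ∧ (∀ i, δ (ρ i) (w i) (ρ (i + 1))) ∧ ∀ n, ∃ m ≥ n, ρ m = f := by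
  obtain ⟨k, hk, hpre, hseg⟩ := hw
  obtain ⟨τ, hτ0, hτlen, hτstep⟩ := Reach.exists_run hpre
  choose σ hσ0 hσlen hσstep using fun j => Reach.exists_run (hseg j)
  refine glue w k τ σ hk hτ0 (by simpa using hτlen) ?_ hσ0
    (fun j => by simpa using hσlen j) ?_
  · intro i hi
    have h := hτstep i (by simpa using hi)
    simpa using h
  · intro j i hi
    have h := hσstep j i (by simpa using hi)
    simpa using h

end Stmt18Aux

open Stmt18Aux in
/-- Büchi decomposition: every ω-regular language `L` (one recognized by a
Büchi automaton) can be written as a finite union `L = ⋃ i, U_i · V_i^ω`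
with all `U_i`, `V_i` regular languages of finite words. -/
theorem stmt18 {A : Type} [Fintype A] (L : Set (ℕ → A))
    (hL : ∃ (Q : Type) (_ : Fintype Q) (δ : Q → A → Q → Prop) (q0 : Q) (F : Set Q),
      L = {w | ∃ ρ : ℕ → Q, ρ 0 = q0 ∧ (∀ i, δ (ρ i) (w i) (ρ (i + 1))) ∧
            ∀ n, ∃ m ≥ n, ρ m ∈ F}) :
    ∃ (n : ℕ) (U V : Fin n → Set (List A)),
      (∀ i, IsRegularLang (U i)) ∧ (∀ i, IsRegularLang (V i)) ∧
      L = ⋃ i, OmegaCat (U i) (V i) := by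
  classical
  obtain ⟨Q, hQ, δ, q0, F, rfl⟩ := hL
  haveI := hQ
  let e : Q ≃ Fin (Fintype.card Q) := Fintype.equivFin Q
  refine ⟨Fintype.card Q,
    fun i => if e.symm i ∈ F then {x | Reach δ q0 x (e.symm i)} else ∅,
    fun i => {x | Reach δ (e.symm i) x (e.symm i)}, ?_, ?_, ?_⟩
  · intro i
    dsimp only
    by_cases h : e.symm i ∈ F
    · rw [if_pos h]; exact isRegular_reach δ q0 (e.symm i)
    · rw [if_neg h]; exact isRegular_empty
  · intro i
    exact isRegular_reach δ (e.symm i) (e.symm i)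
  · ext w
    constructor
    · rintro ⟨ρ, hρ0, hδ, hF⟩
      have hSinf : {m | ρ m ∈ F}.Infinite := by
        apply Set.infinite_of_forall_exists_gt
        intro n
        obtain ⟨m, hm, hmF⟩ := hF (n + 1)
        exact ⟨m, hmF, by omega⟩
      haveI : Infinite {m // ρ m ∈ F} := hSinf.to_subtype
      obtain ⟨f, hfib⟩ := Finite.exists_infinite_fiber (fun m : {m // ρ m ∈ F} => ρ m.1)
      haveI := hfib
      obtain ⟨⟨⟨m0, hm0⟩, hm0'⟩⟩ := (inferInstance : Nonempty
        ((fun m : {m // ρ m ∈ F} => ρ m.1) ⁻¹' {f}))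
      have hfF : f ∈ F := by
        have : ρ m0 = f := hm0'
        rwa [this] at hm0
      have hinf : {m | ρ m = f}.Infinite := by
        apply Set.infinite_of_injective_forall_mem
          (f := fun x : ((fun m : {m // ρ m ∈ F} => ρ m.1) ⁻¹' {f}) => (x.1.1 : ℕ))
        · intro x y hxy
          exact Subtype.ext (Subtype.ext hxy)
        · intro x
          exact x.2
      have hnth : ∀ j, ρ (Nat.nth (fun m => ρ m = f) j) = f :=
        fun j => Nat.nth_mem_of_infinite hinf j
      refine Set.mem_iUnion.mpr ⟨e f, ?_⟩
      dsimp only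
      rw [show e.symm (e f) = f from e.symm_apply_apply f, if_pos hfF]
      set k : ℕ → ℕ := Nat.nth (fun m => ρ m = f) with hkdef
      have hklt : ∀ j, k j < k (j + 1) :=
        fun j => (Nat.nth_lt_nth hinf).mpr (Nat.lt_succ_self j)
      refine ⟨k, hklt, ?_, ?_⟩
      · have h := reach_of_run hδ 0 (k 0)
        rw [hρ0] at h
        have h2 : ρ (0 + k 0) = f := by rw [Nat.zero_add]; exact hnth 0
        rw [h2] at h
        simpa using h
      · intro j
        have h := reach_of_run hδ (k j) (k (j + 1) - k j)
        rw [Nat.add_sub_cancel' (le_of_lt (hklt j))] at h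
        rw [hnth j, hnth (j + 1)] at h
        exact h
    · intro hw
      obtain ⟨i, hw⟩ := Set.mem_iUnion.mp hw
      dsimp only at hw
      by_cases hf : e.symm i ∈ F
      · rw [if_pos hf] at hw
        obtain ⟨ρ, hρ0, hδ, hfin⟩ := exists_run_of_omegaCat hw
        refine ⟨ρ, hρ0, hδ, ?_⟩
        intro n
        obtain ⟨m, hm, hm'⟩ := hfin n
        exact ⟨m, hm, by rw [hm']; exact hf⟩
      · rw [if_neg hf] at hw
        obtain ⟨k, _, hpre, _⟩ := hw
        exact hpre.elim
end

section
/- Transition-invariant/Ramsey principle: if a binary relation R on a set S can be covered by finitely many relations T_1, ..., T_n such that the transitive closure of R is contained in T_1 ∪ ... ∪ T_n and each T_i is well-founded, then R admits no infinite chain s_0 R s_1 R s_2 .... -/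
/-- Infinite pigeonhole: an infinite set of naturals has an infinite fiber
under any map into `Fin n`. -/
lemma stmt19_pigeonhole {n : ℕ} (X : Set ℕ) (hX : X.Infinite) (g : ℕ → Fin n) :
    ∃ i, {m ∈ X | g m = i}.Infinite := by
  by_contra h
  push_neg at h
  have hsub : X ⊆ ⋃ i, {m ∈ X | g m = i} := fun m hm => Set.mem_iUnion.2 ⟨g m, hm, rfl⟩
  exact hX ((Set.finite_iUnion (fun i => h i)).subset hsub)

/-- Transition-invariant / Ramsey principle: if the transitive closure of a
relation `R` is covered by finitely many relations `T_1, ..., T_n`, each of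
which is well-founded as a transition relation (admits no infinite
`T_i`-chain), then `R` admits no infinite chain `s_0 R s_1 R s_2 ...`. -/
theorem stmt19 {S : Type} (R : S → S → Prop) (n : ℕ)
    (T : Fin n → S → S → Prop)
    (hcover : ∀ x y, Relation.TransGen R x y → ∃ i, T i x y)
    (hwf : ∀ i, ¬ ∃ x : ℕ → S, ∀ j, T i (x j) (x (j + 1))) :
    ¬ ∃ s : ℕ → S, ∀ k, R (s k) (s (k + 1)) := by
  classical
  rintro ⟨s, hs⟩
  -- transitive chain between any two indices
  have hchain : ∀ k l, k < l → Relation.TransGen R (s k) (s l) := by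
    have base : ∀ k d, Relation.TransGen R (s k) (s (k + d + 1)) := by
      intro k d
      induction d with
      | zero => exact Relation.TransGen.single (hs k)
      | succ d ih => exact ih.tail (hs (k + d + 1))
    intro k l hkl
    obtain ⟨d, rfl⟩ := Nat.exists_eq_add_of_lt hkl
    exact base k d
  -- `Fin n` is nonempty
  obtain ⟨i0, -⟩ := hcover (s 0) (s 1) (hchain 0 1 Nat.one_pos)
  -- coloring of pairs
  obtain ⟨f, hf⟩ : ∃ f : ℕ → ℕ → Fin n, ∀ k l, k < l → T (f k l) (s k) (s l) := by
    refine ⟨fun k l => if h : k < l then (hcover _ _ (hchain k l h)).choose else i0,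
      fun k l h => ?_⟩
    simp only [dif_pos h]
    exact (hcover _ _ (hchain k l h)).choose_spec
  -- one refinement step
  have key : ∀ (a : ℕ) (X : Set ℕ), X.Infinite → ∃ (b : ℕ) (i : Fin n) (Y : Set ℕ),
      b ∈ X ∧ a < b ∧ Y ⊆ X ∧ Y.Infinite ∧ ∀ m ∈ Y, b < m ∧ f b m = i := by
    intro a X hX
    obtain ⟨b, hbX, hab⟩ := hX.exists_gt a
    have h1 : {m ∈ X | b < m}.Infinite := by
      have he : {m ∈ X | b < m} = X \ Set.Iic b := by
        ext m; simp [Set.mem_Iic, not_le]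
      rw [he]; exact hX.diff (Set.finite_Iic b)
    obtain ⟨i, hi⟩ := stmt19_pigeonhole _ h1 (f b)
    refine ⟨b, i, _, hbX, hab, ?_, hi, ?_⟩
    · exact fun m hm => hm.1.1
    · exact fun m hm => ⟨hm.1.2, hm.2⟩
  choose bF iF YF hmemF hltF hsubF hinfF hcolF using key
  -- iterated construction
  set A := Σ' (a : ℕ) (i : Fin n) (X : Set ℕ), X.Infinite ∧ ∀ m ∈ X, a < m ∧ f a m = i with hA
  set F : A → A := fun p =>
    ⟨bF p.1 p.2.2.1 p.2.2.2.1, iF p.1 p.2.2.1 p.2.2.2.1, YF p.1 p.2.2.1 p.2.2.2.1,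
      hinfF _ _ _, hcolF _ _ _⟩ with hF
  have hu : (Set.univ : Set ℕ).Infinite := Set.infinite_univ
  set init : A := ⟨bF 0 Set.univ hu, iF 0 Set.univ hu, YF 0 Set.univ hu,
      hinfF _ _ _, hcolF _ _ _⟩ with hinit
  set q : ℕ → A := fun k => F^[k] init with hq
  have hqsucc : ∀ k, q (k + 1) = F (q k) := fun k => Function.iterate_succ_apply' F k init
  set a : ℕ → ℕ := fun k => (q k).1 with ha
  set col : ℕ → Fin n := fun k => (q k).2.1 with hcol
  set Xs : ℕ → Set ℕ := fun k => (q k).2.2.1 with hXs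
  have hcolprop : ∀ k, ∀ m ∈ Xs k, a k < m ∧ f (a k) m = col k := fun k => (q k).2.2.2.2
  have hstep : ∀ k, a (k + 1) ∈ Xs k ∧ Xs (k + 1) ⊆ Xs k := by
    intro k
    constructor
    · show (q (k + 1)).1 ∈ (q k).2.2.1
      rw [hqsucc k]
      exact hmemF _ _ _
    · show (q (k + 1)).2.2.1 ⊆ (q k).2.2.1
      rw [hqsucc k]
      exact hsubF _ _ _
  have hXmono : ∀ k l, k ≤ l → Xs l ⊆ Xs k := by
    intro k l hkl
    induction l, hkl using Nat.le_induction with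
    | base => exact subset_rfl
    | succ l hkl ih => exact ih.trans' (hstep l).2
  have hmem2 : ∀ k l, k < l → a l ∈ Xs k := by
    intro k l hkl
    obtain ⟨d, rfl⟩ := Nat.exists_eq_add_of_lt hkl
    exact hXmono k (k + d) (Nat.le_add_right _ _) (hstep (k + d)).1
  have hpair : ∀ k l, k < l → a k < a l ∧ f (a k) (a l) = col k :=
    fun k l h => hcolprop k _ (hmem2 k l h)
  -- pigeonhole on colors
  obtain ⟨c, hc⟩ := stmt19_pigeonhole Set.univ Set.infinite_univ col
  -- extract increasing monochromatic indices
  have hnext : ∀ k : ℕ, ∃ l, k < l ∧ col l = c := by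
    intro k
    obtain ⟨l, hl, hkl⟩ := hc.exists_gt k
    exact ⟨l, hkl, hl.2⟩
  choose nx hnx1 hnx2 using hnext
  set e : ℕ → ℕ := fun j => nx^[j + 1] 0 with he
  have hesucc : ∀ j, e (j + 1) = nx (e j) := by
    intro j
    show nx^[j + 1 + 1] 0 = nx (nx^[j + 1] 0)
    rw [Function.iterate_succ_apply']
  have hecol : ∀ j, col (e j) = c := by
    intro j
    show col (nx^[j + 1] 0) = c
    rw [Function.iterate_succ_apply']
    exact hnx2 _
  have hemono : ∀ j, e j < e (j + 1) := by
    intro j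
    rw [hesucc j]
    exact hnx1 _
  -- build the infinite `T c`-chain
  refine hwf c ⟨fun j => s (a (e j)), fun j => ?_⟩
  have h1 := hpair (e j) (e (j + 1)) (hemono j)
  have h2 := hf (a (e j)) (a (e (j + 1))) h1.1
  rw [h1.2, hecol j] at h2
  exact h2
end
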